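/- arXiv:1207.4311 — 5 statements merged into one kernel-verified Lean document; each statement's English description precedes it below -/
import Mathlib

section
/- Assume κ^{<κ} = κ. Every Borel function f : 2^κ → 2^κ is continuous on a co-meager set: there exist κ-many dense open sets D_i ⊆ 2^κ (i < κ) such that f restricted to ⋂_{i<κ} D_i is continuous. -/
open Set

universe u

namespace GDST

def KS (I : Type u) : Type u := I → I
def CS (I : Type u) : Type u := I → Bool

def kBasic {I : Type u} [LT I] (ζ : I → I) (β : I) : Set (KS I) :=
  {η : KS I | ∀ α : I, α < β → η α = ζ α}

def cBasic {I : Type u} [LT I] (ζ : I → Bool) (β : I) : Set (CS I) :=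
  {η : CS I | ∀ α : I, α < β → η α = ζ α}

instance kTop {I : Type u} [LT I] : TopologicalSpace (KS I) :=
  TopologicalSpace.generateFrom {U | ∃ ζ β, U = kBasic ζ β}

instance cTop {I : Type u} [LT I] : TopologicalSpace (CS I) :=
  TopologicalSpace.generateFrom {U | ∃ ζ β, U = cBasic ζ β}
/-- κ-Borel subsets of `2^κ`: smallest family containing the basic open sets and closed
under complements and intersections of size `≤ κ` (indexed by `I`, of cardinality `κ`). -/
inductive IsCBorel {I : Type u} [LT I] : Set (CS I) → Prop
  | basic (ζ : I → Bool) (β : I) : IsCBorel (cBasic ζ β)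
  | compl {s : Set (CS I)} : IsCBorel s → IsCBorel sᶜ
  | iInter {s : I → Set (CS I)} : (∀ i, IsCBorel (s i)) → IsCBorel (⋂ i, s i)
section BPsec

variable {I : Type} [LinearOrder I]

/-- The Baire-property style predicate: `s` agrees with an open set on the
intersection of `I`-many dense open sets. -/
def BP (s : Set (CS I)) : Prop :=
  ∃ O : Set (CS I), IsOpen O ∧ ∃ D : I → Set (CS I),
    (∀ i, IsOpen (D i) ∧ Dense (D i)) ∧
    s ∩ (⋂ i, D i) = O ∩ (⋂ i, D i)

lemma isOpen_cBasic (ζ : I → Bool) (β : I) : IsOpen (cBasic ζ β) :=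
  TopologicalSpace.GenerateOpen.basic _ ⟨ζ, β, rfl⟩

lemma bp_of_isOpen {s : Set (CS I)} (hs : IsOpen s) : BP s :=
  ⟨s, hs, fun _ => univ, fun _ => ⟨isOpen_univ, dense_univ⟩, rfl⟩

lemma bp_compl [Nonempty I] {s : Set (CS I)} (h : BP s) : BP sᶜ := by
  obtain ⟨O, hO, D, hD, heq⟩ := h
  have hEopen : IsOpen (O ∪ (closure O)ᶜ) :=
    hO.union (isOpen_compl_iff.mpr isClosed_closure)
  have hfr : interior (closure O \ O) = ∅ := by
    rw [eq_empty_iff_forall_notMem]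
    intro x hx
    have hxc : x ∈ closure O := (interior_subset hx).1
    obtain ⟨y, hy1, hy2⟩ := mem_closure_iff.mp hxc _ isOpen_interior hx
    exact (interior_subset hy1).2 hy2
  have hEdense : Dense (O ∪ (closure O)ᶜ) := by
    have := interior_eq_empty_iff_dense_compl.mp hfr
    have hcompl : (closure O \ O)ᶜ = O ∪ (closure O)ᶜ := by
      rw [diff_eq, compl_inter, compl_compl, union_comm]
    rwa [hcompl] at this
  refine ⟨(closure O)ᶜ, isOpen_compl_iff.mpr isClosed_closure,
    fun i => D i ∩ (O ∪ (closure O)ᶜ),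
    fun i => ⟨(hD i).1.inter hEopen, (hD i).2.inter_of_isOpen_left hEdense (hD i).1⟩, ?_⟩
  ext x
  simp only [mem_inter_iff, mem_iInter, mem_compl_iff]
  constructor
  · rintro ⟨hxs, hxC⟩
    have hC : x ∈ ⋂ i, D i := mem_iInter.mpr fun i => (hxC i).1
    have hE : x ∈ O ∪ (closure O)ᶜ := (hxC (Classical.arbitrary I)).2
    have hxO : x ∉ O := fun hxO => hxs (Set.ext_iff.mp heq x |>.mpr ⟨hxO, hC⟩).1
    refine ⟨?_, hxC⟩
    rcases hE with hE | hE
    · exact absurd hE hxO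
    · exact hE
  · rintro ⟨hxcl, hxC⟩
    have hC : x ∈ ⋂ i, D i := mem_iInter.mpr fun i => (hxC i).1
    have hxO : x ∉ O := fun hxO => hxcl (subset_closure hxO)
    exact ⟨fun hxs => hxO (Set.ext_iff.mp heq x |>.mp ⟨hxs, hC⟩).1, hxC⟩

lemma bp_iUnion {s : I → Set (CS I)} (e : I ≃ I × I) (h : ∀ i, BP (s i)) :
    BP (⋃ i, s i) := by
  choose O hO D hD heq using h
  refine ⟨⋃ i, O i, isOpen_iUnion hO, fun k => D (e k).1 (e k).2,
    fun k => hD _ _, ?_⟩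
  have hC : ∀ x, x ∈ (⋂ k, D (e k).1 (e k).2) → ∀ i, x ∈ ⋂ j, D i j := by
    intro x hx i
    refine mem_iInter.mpr fun j => ?_
    have := mem_iInter.mp hx (e.symm (i, j))
    simpa using this
  ext x
  simp only [mem_inter_iff, mem_iUnion]
  constructor
  · rintro ⟨⟨i, hxs⟩, hxC⟩
    exact ⟨⟨i, (Set.ext_iff.mp (heq i) x |>.mp ⟨hxs, hC x hxC i⟩).1⟩, hxC⟩
  · rintro ⟨⟨i, hxO⟩, hxC⟩
    exact ⟨⟨i, (Set.ext_iff.mp (heq i) x |>.mpr ⟨hxO, hC x hxC i⟩).1⟩, hxC⟩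

lemma bp_iInter [Nonempty I] {s : I → Set (CS I)} (e : I ≃ I × I)
    (h : ∀ i, BP (s i)) : BP (⋂ i, s i) := by
  have := bp_compl (bp_iUnion e (fun i => bp_compl (h i)))
  simpa [compl_iUnion] using this

lemma borel_bp [Nonempty I] (e : I ≃ I × I) {s : Set (CS I)}
    (h : IsCBorel s) : BP s := by
  induction h with
  | basic ζ β => exact bp_of_isOpen (isOpen_cBasic ζ β)
  | compl _ ih => exact bp_compl ih
  | iInter _ ih => exact bp_iInter e ih

lemma cBasic_congr {ζ ζ' : I → Bool} {β : I} (h : ∀ α, α < β → ζ α = ζ' α) :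
    cBasic ζ β = cBasic ζ' β := by
  ext η
  constructor <;> intro hη α hα
  · rw [hη α hα, h α hα]
  · rw [hη α hα, h α hα]

end BPsec

/-- assume `κ^{<κ} = κ`.  Every Borel function `f : 2^κ → 2^κ` (preimages of
open sets are Borel) is continuous on a co-meager set: there are `κ`-many dense open sets
whose intersection is a set on which `f` is continuous. -/
theorem stmt10 (κ : Cardinal) (hreg : κ.IsRegular) (hunc : Cardinal.aleph0 < κ)
    (hpow : Cardinal.powerlt κ κ = κ)
    (I : Type) [LinearOrder I] [WellFoundedLT I] (hI : Cardinal.mk I = κ)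
    (hseg : ∀ i : I, Cardinal.mk {j : I // j < i} < κ)
    (f : CS I → CS I) (hf : ∀ U : Set (CS I), IsOpen U → IsCBorel (f ⁻¹' U)) :
    ∃ D : I → Set (CS I), (∀ i, IsOpen (D i) ∧ Dense (D i)) ∧
      ContinuousOn f (⋂ i, D i) := by
  haveI hne : Nonempty I := by
    rw [← Cardinal.mk_ne_zero_iff, hI]
    exact (Cardinal.aleph0_pos.trans hunc).ne'
  -- an equivalence `I ≃ I × I`
  have hImk : Cardinal.mk I = Cardinal.mk (I × I) := by
    simp only [Cardinal.mk_prod, Cardinal.lift_id]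
    rw [hI, Cardinal.mul_eq_self hunc.le]
  obtain ⟨e⟩ := Cardinal.eq.mp hImk
  -- the basic open sets
  set Bas : Set (Set (CS I)) := {U | ∃ ζ β, U = cBasic ζ β} with hBas
  haveI : Nonempty Bas :=
    ⟨⟨cBasic (fun _ => false) (Classical.arbitrary I), _, _, rfl⟩⟩
  -- `Bas` has cardinality at most `κ`
  have hBasmk : Cardinal.mk Bas ≤ κ := by
    have hsurj : Function.Surjective
        (fun p : Σ β : I, ({α : I // α < β} → Bool) =>
          (⟨cBasic (fun α => if h : α < p.1 then p.2 ⟨α, h⟩ else false) p.1,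
            _, _, rfl⟩ : Bas)) := by
      rintro ⟨U, ζ, β, rfl⟩
      refine ⟨⟨β, fun α => ζ α.1⟩, Subtype.ext ?_⟩
      exact cBasic_congr fun α hα => by simp [hα]
    refine (Cardinal.mk_le_of_surjective hsurj).trans ?_
    rw [Cardinal.mk_sigma]
    have hle : ∀ β : I, Cardinal.mk ({α : I // α < β} → Bool) ≤ κ := by
      intro β
      simp only [Cardinal.mk_arrow, Cardinal.mk_bool, Cardinal.lift_id,
        Cardinal.lift_ofNat]
      have h2 : (2 : Cardinal) ≤ κ := by
        refine le_trans ?_ hunc.le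
        exact (Cardinal.nat_lt_aleph0 2).le
      calc (2 : Cardinal) ^ Cardinal.mk {α : I // α < β}
          ≤ κ ^ Cardinal.mk {α : I // α < β} :=
            Cardinal.power_le_power_right h2
        _ ≤ Cardinal.powerlt κ κ := Cardinal.le_powerlt κ (hseg β)
        _ = κ := hpow
    calc (Cardinal.sum fun β : I => Cardinal.mk ({α : I // α < β} → Bool))
        ≤ Cardinal.sum fun _ : I => κ := Cardinal.sum_le_sum _ _ hle
      _ = Cardinal.mk I * κ := Cardinal.sum_const' I κ
      _ = κ := by rw [hI, Cardinal.mul_eq_self hunc.le]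
  -- an enumeration of the basic open sets indexed by `I`
  obtain ⟨emb⟩ := (Cardinal.le_def _ _).mp (hBasmk.trans_eq hI.symm)
  set g : I → Bas := Function.invFun emb with hg
  have hgemb : ∀ U : Bas, g (emb U) = U :=
    Function.leftInverse_invFun emb.injective
  -- each preimage of a basic set has the Baire property
  have hBP : ∀ i : I, BP (f ⁻¹' (g i : Set (CS I))) := by
    intro i
    obtain ⟨ζ, β, hU⟩ := (g i).2
    refine borel_bp e (hf _ ?_)
    rw [hU]
    exact isOpen_cBasic ζ β
  choose O hO D hD heq using hBP
  refine ⟨fun k => D (e k).1 (e k).2, fun k => hD _ _, ?_⟩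
  have hC : ∀ x, x ∈ (⋂ k, D (e k).1 (e k).2) → ∀ i, x ∈ ⋂ j, D i j := by
    intro x hx i
    refine mem_iInter.mpr fun j => ?_
    have := mem_iInter.mp hx (e.symm (i, j))
    simpa using this
  rw [continuousOn_iff_continuous_restrict]
  refine continuous_generateFrom_iff.mpr ?_
  rintro U ⟨ζ, β, rfl⟩
  set i : I := emb ⟨cBasic ζ β, ζ, β, rfl⟩ with hi
  have hgi : (g i : Set (CS I)) = cBasic ζ β :=
    congrArg Subtype.val (hgemb ⟨cBasic ζ β, ζ, β, rfl⟩)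
  have hkey : Set.restrict (⋂ k, D (e k).1 (e k).2) f ⁻¹' (cBasic ζ β)
      = Subtype.val ⁻¹' (O i) := by
    ext x
    have hx : x.val ∈ ⋂ j, D i j := hC x.val x.2 i
    have hiff := Set.ext_iff.mp (heq i) x.val
    rw [hgi] at hiff
    simp only [mem_preimage, Set.restrict_apply, mem_inter_iff] at hiff ⊢
    constructor
    · intro h
      exact (hiff.mp ⟨h, hx⟩).1
    · intro h
      exact (hiff.mpr ⟨h, hx⟩).1
  rw [show (⋂ i, (fun k => D (e k).1 (e k).2) i).domRestrict f ⁻¹' cBasic ζ β = _ from hkey]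
  exact (hO i).preimage continuous_subtype_val

end GDST
end

section
/- Every κ-Borel subset of 2^κ has the Property of Baire: there exists an open set U such that the symmetric difference of U and the Borel set is κ-meager. -/
open Set

universe u

namespace GDST

section Aux

variable {X : Type*} [TopologicalSpace X]

lemma nwd_union {s t : Set X} (hs : interior (closure s) = ∅)
    (ht : interior (closure t) = ∅) : interior (closure (s ∪ t)) = ∅ := by
  rw [closure_union]
  rw [eq_empty_iff_forall_notMem]
  intro x hx
  set O := interior (closure s ∪ closure t) with hO
  have hOopen : IsOpen O := isOpen_interior
  have hOsub : O ⊆ closure s ∪ closure t := interior_subset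
  have h1 : O \ closure s ⊆ closure t := fun y hy => (hOsub hy.1).resolve_left hy.2
  have h2 : O \ closure s ⊆ interior (closure t) :=
    interior_maximal h1 (hOopen.sdiff isClosed_closure)
  rw [ht, subset_empty_iff, diff_eq_empty] at h2
  have : O ⊆ interior (closure s) := interior_maximal h2 hOopen
  rw [hs, subset_empty_iff] at this
  simp [this] at hx

lemma nwd_closed_diff_interior {C : Set X} (hC : IsClosed C) :
    interior (closure (C \ interior C)) = ∅ := by
  have h : C \ interior C = frontier C := by
    simp [frontier, hC.closure_eq]
  rw [h, isClosed_frontier.closure_eq, interior_frontier hC]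

/-- The property of Baire with error controlled by an `I`-indexed family of
nowhere dense sets. -/
def HasBP (I : Type) [LT I] (B : Set (CS I)) : Prop :=
  ∃ U : Set (CS I), IsOpen U ∧
    ∃ A : I → Set (CS I), (∀ i, interior (closure (A i)) = ∅) ∧
      symmDiff U B ⊆ ⋃ i, A i

lemma hasBP_compl {I : Type} [LT I] [Nonempty I] {B : Set (CS I)} (hB : HasBP I B) :
    HasBP I Bᶜ := by
  obtain ⟨U, hU, A, hA, hsub⟩ := hB
  refine ⟨interior Uᶜ, isOpen_interior,
    fun i => A i ∪ (Uᶜ \ interior Uᶜ), fun i => nwd_union (hA i)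
      (nwd_closed_diff_interior hU.isClosed_compl), ?_⟩
  intro x hx
  rcases Set.mem_symmDiff.mp hx with ⟨hx1, hx2⟩ | ⟨hx1, hx2⟩
  · -- x ∈ interior Uᶜ, x ∉ Bᶜ, i.e. x ∈ B; then x ∉ U so x ∈ symmDiff U B
    have hxU : x ∉ U := fun h => (interior_subset hx1) h
    have : x ∈ symmDiff U B :=
      Set.mem_symmDiff.mpr (Or.inr ⟨not_not.mp hx2, hxU⟩)
    obtain ⟨i, hi⟩ := mem_iUnion.mp (hsub this)
    exact mem_iUnion.mpr ⟨i, Or.inl hi⟩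
  · -- x ∈ Bᶜ, x ∉ interior Uᶜ
    by_cases hxU : x ∈ U
    · have : x ∈ symmDiff U B := Set.mem_symmDiff.mpr (Or.inl ⟨hxU, hx1⟩)
      obtain ⟨i, hi⟩ := mem_iUnion.mp (hsub this)
      exact mem_iUnion.mpr ⟨i, Or.inl hi⟩
    · obtain ⟨i⟩ := ‹Nonempty I›
      exact mem_iUnion.mpr ⟨i, Or.inr ⟨hxU, hx2⟩⟩

end Aux

/-- every κ-Borel subset of `2^κ` has the Property of Baire: it differs from
an open set by a κ-meager set (a union of at most `κ` nowhere dense sets, indexed by `I`). -/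
theorem stmt12 (κ : Cardinal) (hreg : κ.IsRegular) (hunc : Cardinal.aleph0 < κ)
    (I : Type) [LinearOrder I] [WellFoundedLT I] (hI : Cardinal.mk I = κ)
    (hseg : ∀ i : I, Cardinal.mk {j : I // j < i} < κ)
    (B : Set (CS I)) (hB : IsCBorel B) :
    ∃ U : Set (CS I), IsOpen U ∧
      ∃ A : I → Set (CS I), (∀ i, interior (closure (A i)) = ∅) ∧
        symmDiff U B ⊆ ⋃ i, A i := by
  have haleph : Cardinal.aleph0 ≤ Cardinal.mk I := by rw [hI]; exact hunc.le
  have : Nonempty I := by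
    rw [← Cardinal.mk_ne_zero_iff]
    intro h; rw [h] at haleph; exact (Cardinal.aleph0_pos.not_ge haleph)
  obtain ⟨e⟩ : Nonempty (I ≃ I × I) := by
    rw [← Cardinal.eq, Cardinal.mk_prod]
    simpa using (Cardinal.mul_eq_self haleph).symm
  suffices h : HasBP I B from h
  induction hB with
  | basic ζ β =>
      refine ⟨cBasic ζ β, TopologicalSpace.GenerateOpen.basic _ ⟨ζ, β, rfl⟩,
        fun _ => ∅, by simp, ?_⟩
      rw [symmDiff_self]
      intro x hx
      exact absurd hx (by simp [Set.bot_eq_empty])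
  | compl _ ih => exact hasBP_compl ih
  | iInter h ih =>
      rename_i s
      have h1 : ∀ i, HasBP I (s i)ᶜ := fun i => hasBP_compl (ih i)
      choose U hU A hA hsub using h1
      have hun : HasBP I (⋃ i, (s i)ᶜ) := by
        refine ⟨⋃ i, U i, isOpen_iUnion hU,
          fun j => A (e j).1 (e j).2, fun j => hA _ _, ?_⟩
        intro x hx
        rcases Set.mem_symmDiff.mp hx with ⟨hx1, hx2⟩ | ⟨hx1, hx2⟩
        · obtain ⟨i, hi⟩ := mem_iUnion.mp hx1
          have : x ∈ symmDiff (U i) (s i)ᶜ :=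
            Set.mem_symmDiff.mpr (Or.inl ⟨hi, fun hc => hx2 (mem_iUnion.mpr ⟨i, hc⟩)⟩)
          obtain ⟨j, hj⟩ := mem_iUnion.mp (hsub i this)
          exact mem_iUnion.mpr ⟨e.symm (i, j), by simpa using hj⟩
        · obtain ⟨i, hi⟩ := mem_iUnion.mp hx1
          have : x ∈ symmDiff (U i) (s i)ᶜ :=
            Set.mem_symmDiff.mpr (Or.inr ⟨hi, fun hc => hx2 (mem_iUnion.mpr ⟨i, hc⟩)⟩)
          obtain ⟨j, hj⟩ := mem_iUnion.mp (hsub i this)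
          exact mem_iUnion.mpr ⟨e.symm (i, j), by simpa using hj⟩
      have := hasBP_compl hun
      rw [compl_iUnion] at this
      simpa using this
      
end GDST
end

section
/- Let X ⊆ κ be a stationary set and let CUB(X) = {η ∈ 2^κ : X \ η^{-1}{1} is non-stationary in κ}. Then CUB(X) does not have the Property of Baire: for every open U ⊆ 2^κ, the symmetric difference U Δ CUB(X) is not κ-meager. In particular, 2^κ \ CUB(X) is non-meager in every nonempty open set. -/
open Set

universe u

namespace GDST

/-- `C` is closed in `o`: every nonzero accumulation point of `C` below `o` lies in `C`. -/
def ClosedIn (C : Set Ordinal) (o : Ordinal) : Prop :=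
  ∀ a : Ordinal, a < o → a ≠ 0 → (∀ b : Ordinal, b < a → ∃ c ∈ C, b < c ∧ c < a) → a ∈ C

/-- `C` is unbounded in `o`. -/
def UnbIn (C : Set Ordinal) (o : Ordinal) : Prop :=
  ∀ a : Ordinal, a < o → ∃ b ∈ C, a < b ∧ b < o

/-- `C` is closed and unbounded (club) in `o`. -/
def ClubIn (C : Set Ordinal) (o : Ordinal) : Prop := ClosedIn C o ∧ UnbIn C o

/-- `S` is stationary in `o`: it meets every club subset of `o`. -/
def StatIn (S : Set Ordinal) (o : Ordinal) : Prop := ∀ C, ClubIn C o → (S ∩ C).Nonempty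

/-- The ordinals `< κ`, our copy of the cardinal `κ` as an ordered set. -/
abbrev Sub (κ : Cardinal) : Type 1 := {o : Ordinal // o < κ.ord}

/-- The subset of `κ` coded by `η ∈ 2^κ`. -/
def toSet (κ : Cardinal) (η : CS (Sub κ)) : Set Ordinal :=
  {o : Ordinal | ∃ h : o < κ.ord, η ⟨o, h⟩ = true}

/-- `CUB(X) = {η ∈ 2^κ : X \ η⁻¹{1} is non-stationary}`. -/
def CUBset (κ : Cardinal) (X : Set Ordinal) : Set (CS (Sub κ)) :=
  {η | ¬ StatIn (X \ toSet κ η) κ.ord}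

variable {κ : Cardinal.{0}}

lemma cBasic_isOpen (ζ : CS (Sub κ)) (β : Sub κ) : IsOpen (cBasic ζ β) :=
  TopologicalSpace.isOpen_generateFrom_of_mem ⟨ζ, β, rfl⟩

lemma self_mem_cBasic (ζ : CS (Sub κ)) (β : Sub κ) : ζ ∈ cBasic ζ β := fun _ _ => rfl

lemma isBasis (hκ : (0:Ordinal) < κ.ord) :
    TopologicalSpace.IsTopologicalBasis {U : Set (CS (Sub κ)) | ∃ ζ β, U = cBasic ζ β} := by
  constructor
  · rintro U ⟨ζ₁, β₁, rfl⟩ V ⟨ζ₂, β₂, rfl⟩ η ⟨h1, h2⟩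
    refine ⟨cBasic η ⟨max β₁.1 β₂.1, max_lt β₁.2 β₂.2⟩, ⟨η, _, rfl⟩, self_mem_cBasic _ _, ?_⟩
    rintro τ hτ
    constructor
    · intro α hα
      rw [hτ α (lt_of_lt_of_le hα (by exact le_max_left _ _)), h1 α hα]
    · intro α hα
      rw [hτ α (lt_of_lt_of_le hα (by exact le_max_right _ _)), h2 α hα]
  · apply subset_antisymm (subset_univ _)
    intro η _
    refine mem_sUnion.2 ⟨cBasic η ⟨0, hκ⟩, ⟨η, _, rfl⟩, self_mem_cBasic _ _⟩
  · rfl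

/-- Extend a condition `(ζ, β)` to avoid a nowhere dense set `A`. -/
lemma avoid (hκ : Cardinal.aleph0 ≤ κ) {A : Set (CS (Sub κ))}
    (hA : interior (closure A) = ∅) (ζ : CS (Sub κ)) (β : Ordinal) (hβ : β < κ.ord) :
    ∃ (ζ' : CS (Sub κ)) (β' : Ordinal), β < β' ∧ β' < κ.ord ∧
      (∀ α : Sub κ, α.1 < β → ζ' α = ζ α) ∧
      (∀ τ : CS (Sub κ), (∀ α : Sub κ, α.1 < β' → τ α = ζ' α) → τ ∉ A) := by
  have hlim := Cardinal.isSuccLimit_ord hκ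
  have h0 : (0:Ordinal) < κ.ord := hlim.pos
  have hnotsub : ¬ (cBasic ζ ⟨β, hβ⟩ ⊆ closure A) := by
    intro hsub
    have : cBasic ζ ⟨β, hβ⟩ ⊆ interior (closure A) :=
      interior_maximal hsub (cBasic_isOpen _ _)
    rw [hA] at this
    exact this (self_mem_cBasic _ _)
  obtain ⟨η, hη1, hη2⟩ := not_subset.mp hnotsub
  obtain ⟨V, ⟨ζ₂, β₂, rfl⟩, hηV, hVsub⟩ :=
    (isBasis h0).exists_subset_of_mem_open (show η ∈ (closure A)ᶜ from hη2)
      (isOpen_compl_iff.2 isClosed_closure)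
  refine ⟨η, (max β β₂.1) + 1, ?_, ?_, ?_, ?_⟩
  · exact lt_of_le_of_lt (le_max_left _ _) (lt_add_one _)
  · exact hlim.succ_lt (max_lt hβ β₂.2)
  · exact fun α hα => hη1 α hα
  · intro τ hτ hτA
    have hτV : τ ∈ cBasic ζ₂ β₂ := by
      intro α hα
      have hα' : α.1 < β₂.1 := hα
      rw [hτ α (lt_of_lt_of_le hα' (le_of_lt (lt_of_le_of_lt (le_max_right _ _) (lt_add_one _)))),
        hηV α hα]
    exact hVsub hτV (subset_closure hτA)

section Construction

variable (κ) (A : Sub κ → Set (CS (Sub κ))) (b : Bool) (ζ0 : CS (Sub κ)) (β0 : Ordinal)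

open Classical in
/-- The "union" of the previous conditions (with the initial condition as fallback). -/
noncomputable def glueZ (i : Ordinal) (prev : ∀ j, j < i → CS (Sub κ) × Ordinal) : CS (Sub κ) :=
  fun α => if (∃ j, ∃ hj : j < i, α.1 < (prev j hj).2 ∧ (prev j hj).1 α = true) ∨
      ((∀ j (hj : j < i), ¬ α.1 < (prev j hj).2) ∧ ζ0 α = true) then true else false

noncomputable def glueB (i : Ordinal) (prev : ∀ j, j < i → CS (Sub κ) × Ordinal) : Ordinal :=
  β0 ⊔ Ordinal.blsub i (fun j hj => (prev j hj).2)

/-- Specification of a successful step at stage `i`. -/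
def StepProp (i : Ordinal) (bg : Ordinal) (zg : CS (Sub κ)) (p : CS (Sub κ) × Ordinal) : Prop :=
  bg < p.2 ∧ p.2 < κ.ord ∧ (∀ α : Sub κ, α.1 < bg → p.1 α = zg α) ∧
    (∀ hg : bg < κ.ord, p.1 ⟨bg, hg⟩ = b) ∧
    (∀ hi : i < κ.ord, ∀ τ : CS (Sub κ), (∀ α : Sub κ, α.1 < p.2 → τ α = p.1 α) → τ ∉ A ⟨i, hi⟩)

open Classical in
noncomputable def stepFn (i : Ordinal) (prev : ∀ j, j < i → CS (Sub κ) × Ordinal) :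
    CS (Sub κ) × Ordinal :=
  if h : ∃ p, StepProp κ A b i (glueB κ β0 i prev) (glueZ κ ζ0 i prev) p then h.choose
  else (ζ0, 0)

noncomputable def cond : Ordinal → CS (Sub κ) × Ordinal :=
  Ordinal.lt_wf.fix (stepFn κ A b ζ0 β0)

lemma cond_eq (i : Ordinal) :
    cond κ A b ζ0 β0 i = stepFn κ A b ζ0 β0 i (fun j _ => cond κ A b ζ0 β0 j) :=
  Ordinal.lt_wf.fix_eq _ i

noncomputable def bgc (i : Ordinal) : Ordinal :=
  glueB κ β0 i (fun j _ => cond κ A b ζ0 β0 j)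

noncomputable def zgc (i : Ordinal) : CS (Sub κ) :=
  glueZ κ ζ0 i (fun j _ => cond κ A b ζ0 β0 j)

lemma cond_spec {i : Ordinal}
    (h : ∃ p, StepProp κ A b i (bgc κ A b ζ0 β0 i) (zgc κ A b ζ0 β0 i) p) :
    StepProp κ A b i (bgc κ A b ζ0 β0 i) (zgc κ A b ζ0 β0 i) (cond κ A b ζ0 β0 i) := by
  simp only [bgc, zgc] at h ⊢
  rw [cond_eq, stepFn, dif_pos h]
  exact h.choose_spec

lemma stepProp_exists (hκ : Cardinal.aleph0 ≤ κ)
    (hA : ∀ i, interior (closure (A i)) = ∅)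
    {i : Ordinal} (hi : i < κ.ord) {bg : Ordinal} (hbg : bg < κ.ord) (zg : CS (Sub κ)) :
    ∃ p, StepProp κ A b i bg zg p := by
  classical
  have hlim := Cardinal.isSuccLimit_ord hκ
  set ζ1 : CS (Sub κ) := fun α => if α.1 = bg then b else zg α with hζ1
  obtain ⟨ζ', β', h1, h2, h3, h4⟩ :=
    avoid hκ (hA ⟨i, hi⟩) ζ1 (bg + 1) (hlim.succ_lt hbg)
  refine ⟨(ζ', β'), lt_trans (lt_add_one _) h1, h2, ?_, ?_, ?_⟩
  · intro α hα
    show ζ' α = zg α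
    rw [h3 α (lt_trans hα (lt_add_one _))]
    show (if α.1 = bg then b else zg α) = zg α
    rw [if_neg (ne_of_lt hα)]
  · intro hg
    show ζ' ⟨bg, hg⟩ = b
    rw [h3 ⟨bg, hg⟩ (lt_add_one _)]
    show (if bg = bg then b else zg ⟨bg, hg⟩) = b
    rw [if_pos rfl]
  · intro hi' τ hτ
    have : A ⟨i, hi'⟩ = A ⟨i, hi⟩ := rfl
    rw [this]
    exact h4 τ hτ

/-- The main invariant, proved by induction on `i < κ.ord`. -/
def Inv (i : Ordinal) : Prop :=
  bgc κ A b ζ0 β0 i < κ.ord ∧ i ≤ bgc κ A b ζ0 β0 i ∧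
  StepProp κ A b i (bgc κ A b ζ0 β0 i) (zgc κ A b ζ0 β0 i) (cond κ A b ζ0 β0 i) ∧
  (∀ α : Sub κ, α.1 < β0 → (cond κ A b ζ0 β0 i).1 α = ζ0 α) ∧
  (∀ j, j < i → ∀ α : Sub κ, α.1 < (cond κ A b ζ0 β0 j).2 →
    (cond κ A b ζ0 β0 i).1 α = (cond κ A b ζ0 β0 j).1 α)

lemma inv_all (hreg : κ.IsRegular) (hA : ∀ i, interior (closure (A i)) = ∅)
    (hβ0 : β0 < κ.ord) : ∀ i < κ.ord, Inv κ A b ζ0 β0 i := by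
  classical
  have hκ : Cardinal.aleph0 ≤ κ := hreg.aleph0_le
  intro i
  induction i using Ordinal.induction with
  | _ i IH =>
  intro hi
  -- previous bounds are `< κ.ord`
  have hb : ∀ j, j < i → (cond κ A b ζ0 β0 j).2 < κ.ord :=
    fun j hj => ((IH j hj (hj.trans hi)).2.2.1).2.1
  have hjlt : ∀ j, j < i → j < (cond κ A b ζ0 β0 j).2 := fun j hj =>
    lt_of_le_of_lt (IH j hj (hj.trans hi)).2.1 ((IH j hj (hj.trans hi)).2.2.1).1
  have h1 : bgc κ A b ζ0 β0 i < κ.ord := by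
    rw [bgc, glueB]
    apply max_lt hβ0
    apply Ordinal.blsub_lt_ord
    · rw [hreg.cof_eq]; exact Cardinal.lt_ord.mp hi
    · exact hb
  have hble : Ordinal.blsub i (fun j _ => (cond κ A b ζ0 β0 j).2) ≤ bgc κ A b ζ0 β0 i :=
    le_max_right _ _
  have h2 : i ≤ bgc κ A b ζ0 β0 i := by
    refine le_trans (le_of_forall_lt fun x hx => ?_) hble
    exact lt_of_lt_of_le (hjlt x hx)
      (le_of_lt (Ordinal.lt_blsub (fun j _ => (cond κ A b ζ0 β0 j).2) x hx))
  have h3 := cond_spec κ A b ζ0 β0 (stepProp_exists κ A b hκ hA hi h1 (zgc κ A b ζ0 β0 i))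
  -- glue coherence with previous stages
  have claimA : ∀ j, j < i → ∀ α : Sub κ, α.1 < (cond κ A b ζ0 β0 j).2 →
      zgc κ A b ζ0 β0 i α = (cond κ A b ζ0 β0 j).1 α := by
    intro j hj α hα
    rw [zgc, glueZ]
    cases hv : (cond κ A b ζ0 β0 j).1 α with
    | true => rw [if_pos (Or.inl ⟨j, hj, hα, hv⟩)]
    | false =>
      rw [if_neg]
      rintro (⟨j', hj', hα', hv'⟩ | ⟨hall, _⟩)
      · rcases lt_trichotomy j j' with h | h | h
        · have := (IH j' hj' (hj'.trans hi)).2.2.2.2 j h α hα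
          rw [this, hv] at hv'; exact Bool.false_ne_true hv'
        · subst h; rw [hv] at hv'; exact Bool.false_ne_true hv'
        · have := (IH j hj (hj.trans hi)).2.2.2.2 j' h α hα'
          rw [this] at hv; rw [hv] at hv'; exact Bool.false_ne_true hv'
      · exact hall j hj hα
  have claimB : ∀ α : Sub κ, α.1 < β0 → zgc κ A b ζ0 β0 i α = ζ0 α := by
    intro α hα
    rw [zgc, glueZ]
    cases hv : ζ0 α with
    | true =>
      rw [if_pos]
      by_cases hex : ∃ j, ∃ hj : j < i, α.1 < (cond κ A b ζ0 β0 j).2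
      · obtain ⟨j, hj, hαj⟩ := hex
        have := (IH j hj (hj.trans hi)).2.2.2.1 α hα
        exact Or.inl ⟨j, hj, hαj, by rw [this, hv]⟩
      · exact Or.inr ⟨fun j hj hlt => hex ⟨j, hj, hlt⟩, rfl⟩
    | false =>
      rw [if_neg]
      rintro (⟨j, hj, hαj, hv'⟩ | ⟨_, hz⟩)
      · have := (IH j hj (hj.trans hi)).2.2.2.1 α hα
        rw [this, hv] at hv'; exact Bool.false_ne_true hv'
      · exact Bool.false_ne_true hz
  refine ⟨h1, h2, h3, ?_, ?_⟩
  · intro α hα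
    have hαbg : α.1 < bgc κ A b ζ0 β0 i := lt_of_lt_of_le hα (by rw [bgc, glueB]; exact le_max_left _ _)
    rw [h3.2.2.1 α hαbg, claimB α hα]
  · intro j hj α hα
    have hαbg : α.1 < bgc κ A b ζ0 β0 i :=
      lt_of_lt_of_le (lt_of_lt_of_le hα
        (le_of_lt (Ordinal.lt_blsub (fun j _ => (cond κ A b ζ0 β0 j).2) j hj))) hble
    rw [h3.2.2.1 α hαbg, claimA j hj α hα]


lemma exists_generic (hreg : κ.IsRegular)
    (hA : ∀ i, interior (closure (A i)) = ∅) (hβ0 : β0 < κ.ord) :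
    ∃ η : CS (Sub κ), (∀ α : Sub κ, α.1 < β0 → η α = ζ0 α) ∧ (∀ i, η ∉ A i) ∧
      ∃ C : Set Ordinal, C ⊆ Iio κ.ord ∧ ClubIn C κ.ord ∧
        ∀ c (hc : c < κ.ord), c ∈ C → η ⟨c, hc⟩ = b := by
  have hκ : Cardinal.aleph0 ≤ κ := hreg.aleph0_le
  have hlim := Cardinal.isSuccLimit_ord hκ
  have I := inv_all κ A b ζ0 β0 hreg hA hβ0
  set F := cond κ A b ζ0 β0 with hF
  set B := bgc κ A b ζ0 β0 with hB
  set η : CS (Sub κ) := fun α => (F (α.1 + 1)).1 α with hη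
  have hBlt : ∀ i, i < κ.ord → B i < κ.ord := fun i hi => (I i hi).1
  have hBge : ∀ i, i < κ.ord → i ≤ B i := fun i hi => (I i hi).2.1
  have hBF : ∀ i, i < κ.ord → B i < (F i).2 := fun i hi => (I i hi).2.2.1.1
  have hcoh : ∀ i, ∀ hi : i < κ.ord, ∀ α : Sub κ, α.1 < (F i).2 → η α = (F i).1 α := by
    intro i hi α hα
    have hs : α.1 + 1 < κ.ord := hlim.succ_lt α.2
    show (F (α.1 + 1)).1 α = (F i).1 α
    have hα2 : α.1 < (F (α.1 + 1)).2 :=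
      lt_of_lt_of_le (lt_add_one _) (le_of_lt (lt_of_le_of_lt (hBge _ hs) (hBF _ hs)))
    rcases lt_trichotomy (α.1 + 1) i with h | h | h
    · exact ((I i hi).2.2.2.2 (α.1 + 1) h α hα2).symm
    · rw [h]
    · exact (I (α.1 + 1) hs).2.2.2.2 i h α hα
  have hmono : ∀ j i, j ≤ i → B j ≤ B i := by
    intro j i hji
    rw [hB, bgc, bgc, glueB, glueB]
    apply max_le (le_max_left _ _)
    refine le_trans ?_ (le_max_right _ _)
    rw [Ordinal.blsub_le_iff]
    exact fun k hk => Ordinal.lt_blsub _ k (lt_of_lt_of_le hk hji)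
  have hstrict : ∀ j i, j < i → j < κ.ord → B j < B i := by
    intro j i hji hj
    calc B j < (F j).2 := hBF j hj
    _ < Ordinal.blsub i (fun k _ => (F k).2) := Ordinal.lt_blsub _ j hji
    _ ≤ B i := by rw [hB, bgc, glueB]; exact le_max_right _ _
  have hBb : ∀ i, ∀ hi : i < κ.ord, η ⟨B i, hBlt i hi⟩ = b := by
    intro i hi
    rw [hcoh i hi ⟨B i, hBlt i hi⟩ (hBF i hi)]
    exact (I i hi).2.2.1.2.2.2.1 (hBlt i hi)
  refine ⟨η, ?_, ?_, ?_⟩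
  · intro α hα
    have hs : α.1 + 1 < κ.ord := hlim.succ_lt α.2
    exact (I (α.1 + 1) hs).2.2.2.1 α hα
  · intro i hmem
    exact (I i.1 i.2).2.2.1.2.2.2.2 i.2 η (fun α hα => hcoh i.1 i.2 α hα) hmem
  refine ⟨{o : Ordinal | ∃ i, ∃ _ : i < κ.ord, B i = o}, ?_, ⟨?_, ?_⟩, ?_⟩
  · rintro o ⟨i, hi, rfl⟩
    exact hBlt i hi
  · -- closed
    intro a ha h0 hacc
    have haS : a ∈ {i : Ordinal | a ≤ B i} := hBge a ha
    set i := Ordinal.lt_wf.min {i : Ordinal | a ≤ B i} ⟨a, haS⟩ with hidef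
    have hiS : a ≤ B i := Ordinal.lt_wf.min_mem _ ⟨a, haS⟩
    have himin : ∀ x, x < i → B x < a := by
      intro x hx
      by_contra hc
      exact Ordinal.lt_wf.not_lt_min {i : Ordinal | a ≤ B i} (x := x) (not_lt.mp hc) hx
    have hia : i ≤ a := not_lt.mp (Ordinal.lt_wf.not_lt_min {i : Ordinal | a ≤ B i} haS)
    have hik : i < κ.ord := lt_of_le_of_lt hia ha
    rcases eq_or_lt_of_le hiS with heq | hlt
    · exact ⟨i, hik, heq.symm⟩
    · exfalso
      rcases Ordinal.zero_or_succ_or_isSuccLimit i with hz | ⟨k, hk⟩ | hl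
      · obtain ⟨c, ⟨j, hj, rfl⟩, hc1, hc2⟩ := hacc 0 (pos_iff_ne_zero.mpr h0)
        have : B i ≤ B j := by rw [hz]; exact hmono 0 j (zero_le (a := j))
        exact absurd (lt_trans hc2 hlt) (not_lt.mpr this)
      · have hki : k < i := by rw [← hk]; exact Order.lt_succ k
        obtain ⟨c, ⟨j, hj, rfl⟩, hc1, hc2⟩ := hacc (B k) (himin k hki)
        have hkj : k < j := by
          by_contra hc
          exact absurd hc1 (not_lt.mpr (hmono j k (not_lt.mp hc)))
        have : i ≤ j := by rw [← hk]; exact Order.succ_le_of_lt hkj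
        exact absurd (lt_trans hc2 hlt) (not_lt.mpr (hmono i j this))
      · have h0i : (0:Ordinal) < i := hl.pos
        have hβa : β0 < a := lt_of_le_of_lt (by rw [hB, bgc, glueB]; exact le_max_left _ _)
            (himin 0 h0i)
        have hab : a < Ordinal.blsub i (fun k _ => (F k).2) := by
          have := hlt
          rw [hB, bgc, glueB] at this
          rcases lt_max_iff.mp this with h | h
          · exact absurd h (not_lt.mpr (le_of_lt hβa))
          · exact h
        obtain ⟨j, hj, hja⟩ := Ordinal.lt_blsub_iff.mp hab
        have hji : j + 1 < i := hl.succ_lt hj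
        have : a < B (j + 1) :=
          lt_of_le_of_lt hja (lt_of_lt_of_le
            (Ordinal.lt_blsub (fun k _ => (F k).2) j (lt_add_one j))
            (by rw [hB, bgc, glueB]; exact le_max_right _ _))
        exact absurd (himin (j + 1) hji) (not_lt.mpr (le_of_lt this))
  · -- unbounded
    intro a ha
    have hs : a + 1 < κ.ord := hlim.succ_lt ha
    exact ⟨B (a + 1), ⟨a + 1, hs, rfl⟩, lt_of_lt_of_le (lt_add_one a) (hBge _ hs),
      hBlt _ hs⟩
  · rintro c hc ⟨i, hi, rfl⟩
    exact hBb i hi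

end Construction


lemma club_inter (hreg : κ.IsRegular) (hunc : Cardinal.aleph0 < κ) {C D : Set Ordinal}
    (hC : ClubIn C κ.ord) (hD : ClubIn D κ.ord) : ClubIn (C ∩ D) κ.ord := by
  classical
  have hlim := Cardinal.isSuccLimit_ord hreg.aleph0_le
  constructor
  · intro a ha h0 hacc
    constructor
    · refine hC.1 a ha h0 fun e he => ?_
      obtain ⟨c, hc, h1, h2⟩ := hacc e he
      exact ⟨c, hc.1, h1, h2⟩
    · refine hD.1 a ha h0 fun e he => ?_
      obtain ⟨c, hc, h1, h2⟩ := hacc e he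
      exact ⟨c, hc.2, h1, h2⟩
  · intro a ha
    set nextC : Ordinal → Ordinal := fun e =>
      if h : e < κ.ord then (hC.2 e h).choose else 0 with hnC
    set nextD : Ordinal → Ordinal := fun e =>
      if h : e < κ.ord then (hD.2 e h).choose else 0 with hnD
    have hnCs : ∀ e, e < κ.ord → nextC e ∈ C ∧ e < nextC e ∧ nextC e < κ.ord := by
      intro e he
      rw [hnC]; simp only [dif_pos he]
      obtain ⟨h1, h2, h3⟩ := (hC.2 e he).choose_spec
      exact ⟨h1, h2, h3⟩
    have hnDs : ∀ e, e < κ.ord → nextD e ∈ D ∧ e < nextD e ∧ nextD e < κ.ord := by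
      intro e he
      rw [hnD]; simp only [dif_pos he]
      obtain ⟨h1, h2, h3⟩ := (hD.2 e he).choose_spec
      exact ⟨h1, h2, h3⟩
    set x : ℕ → Ordinal := fun n => (fun y => nextD (nextC y))^[n] (a + 1) with hx
    have hx0 : x 0 = a + 1 := rfl
    have hxs : ∀ n, x (n + 1) = nextD (nextC (x n)) := by
      intro n
      rw [hx]
      exact Function.iterate_succ_apply' _ n _
    have hxlt : ∀ n, x n < κ.ord := by
      intro n
      induction n with
      | zero => exact hlim.succ_lt ha
      | succ n ih =>
        rw [hxs]
        exact (hnDs _ (hnCs _ ih).2.2).2.2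
    have hxmono : ∀ n, x n < x (n + 1) := by
      intro n
      rw [hxs]
      exact lt_trans (hnCs _ (hxlt n)).2.1 (hnDs _ (hnCs _ (hxlt n)).2.2).2.1
    set s := ⨆ n, x n with hs
    have hslt : s < κ.ord := by
      refine Ordinal.iSup_lt_ord ?_ hxlt
      rw [hreg.cof_eq, Cardinal.mk_nat]
      exact hunc
    have hles : ∀ n, x n ≤ s := fun n => Ordinal.le_iSup x n
    have has : a < s := lt_of_lt_of_le (lt_add_one a) (hx0 ▸ hles 0)
    have hs0 : s ≠ 0 := by
      intro h
      rw [h] at has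
      exact absurd has (not_lt_of_ge (zero_le (a := a)))
    refine ⟨s, ⟨?_, ?_⟩, has, hslt⟩
    · refine hC.1 s hslt hs0 fun e he => ?_
      obtain ⟨n, hn⟩ := Ordinal.lt_iSup_iff.mp (hs ▸ he)
      refine ⟨nextC (x n), (hnCs _ (hxlt n)).1, lt_trans hn (hnCs _ (hxlt n)).2.1, ?_⟩
      calc nextC (x n) < x (n + 1) := by rw [hxs]; exact (hnDs _ (hnCs _ (hxlt n)).2.2).2.1
      _ ≤ s := hles _
    · refine hD.1 s hslt hs0 fun e he => ?_
      obtain ⟨n, hn⟩ := Ordinal.lt_iSup_iff.mp (hs ▸ he)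
      refine ⟨x (n + 1), by rw [hxs]; exact (hnDs _ (hnCs _ (hxlt n)).2.2).1, ?_, ?_⟩
      · exact lt_trans hn (hxmono n)
      · exact lt_of_lt_of_le (hxmono (n + 1)) (hles _)

/-- for stationary `X ⊆ κ`, the set `CUB(X)` does not have the Property of
Baire: for every open `U`, the symmetric difference `U Δ CUB(X)` is not κ-meager (not covered
by κ-many nowhere dense sets); in particular the complement of `CUB(X)` is non-meager in
every nonempty open set. -/
theorem stmt13 (κ : Cardinal) (hreg : κ.IsRegular) (hunc : Cardinal.aleph0 < κ)
    (hpow : Cardinal.powerlt κ κ = κ)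
    (X : Set Ordinal) (hXsub : X ⊆ Set.Iio κ.ord) (hX : StatIn X κ.ord) :
    (∀ U : Set (CS (Sub κ)), IsOpen U →
      ¬ ∃ A : Sub κ → Set (CS (Sub κ)), (∀ i, interior (closure (A i)) = ∅) ∧
        symmDiff U (CUBset κ X) ⊆ ⋃ i, A i) ∧
    (∀ U : Set (CS (Sub κ)), IsOpen U → U.Nonempty →
      ¬ ∃ A : Sub κ → Set (CS (Sub κ)), (∀ i, interior (closure (A i)) = ∅) ∧
        (CUBset κ X)ᶜ ∩ U ⊆ ⋃ i, A i) := by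
  have hκ : Cardinal.aleph0 ≤ κ := hreg.aleph0_le
  have hlim := Cardinal.isSuccLimit_ord hκ
  have h0 : (0:Ordinal) < κ.ord := hlim.pos
  have key : ∀ U : Set (CS (Sub κ)), IsOpen U → U.Nonempty →
      ∀ A : Sub κ → Set (CS (Sub κ)), (∀ i, interior (closure (A i)) = ∅) →
      ∃ η, η ∈ U ∧ η ∉ CUBset κ X ∧ ∀ i, η ∉ A i := by
    rintro U hU ⟨η0, hη0⟩ A hA
    obtain ⟨V, ⟨ζ0, βb, rfl⟩, hη0V, hVU⟩ := (isBasis h0).exists_subset_of_mem_open hη0 hU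
    obtain ⟨η, hinit, havoid, C, hCsub, hCclub, hCval⟩ :=
      exists_generic κ A false ζ0 βb.1 hreg hA βb.2
    refine ⟨η, hVU (fun α hα => hinit α hα), ?_, havoid⟩
    intro hmem
    apply hmem
    intro D hD
    obtain ⟨x, hxX, hxC, hxD⟩ : ∃ x, x ∈ X ∧ x ∈ C ∧ x ∈ D := by
      obtain ⟨x, hx1, hx2⟩ := hX (C ∩ D) (club_inter hreg hunc hCclub hD)
      exact ⟨x, hx1, hx2.1, hx2.2⟩
    refine ⟨x, ⟨hxX, ?_⟩, hxD⟩
    rintro ⟨hx', hxt⟩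
    rw [hCval x hx' hxC] at hxt
    exact Bool.false_ne_true hxt
  constructor
  · intro U hU
    rintro ⟨A, hA, hcov⟩
    by_cases hne : U.Nonempty
    · obtain ⟨η, hηU, hηC, hav⟩ := key U hU hne A hA
      have hmem : η ∈ symmDiff U (CUBset κ X) := Set.mem_symmDiff.mpr (Or.inl ⟨hηU, hηC⟩)
      obtain ⟨i, hi⟩ := Set.mem_iUnion.mp (hcov hmem)
      exact hav i hi
    · obtain ⟨η, hinit, havoid, C, hCsub, hCclub, hCval⟩ :=
        exists_generic κ A true (fun _ => false) 0 hreg hA h0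
      have hηCUB : η ∈ CUBset κ X := by
        intro hstat
        obtain ⟨x, hx1, hx2⟩ := hstat C hCclub
        exact hx1.2 ⟨hCsub hx2, hCval x (hCsub hx2) hx2⟩
      have hmem : η ∈ symmDiff U (CUBset κ X) :=
        Set.mem_symmDiff.mpr (Or.inr ⟨hηCUB, fun hU' => hne ⟨η, hU'⟩⟩)
      obtain ⟨i, hi⟩ := Set.mem_iUnion.mp (hcov hmem)
      exact havoid i hi
  · intro U hU hne
    rintro ⟨A, hA, hcov⟩
    obtain ⟨η, hηU, hηC, hav⟩ := key U hU hne A hA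
    obtain ⟨i, hi⟩ := Set.mem_iUnion.mp (hcov ⟨hηC, hηU⟩)
    exact hav i hi

end GDST
end

section
/- Suppose κ is regular uncountable, there is a tree K ⊆ 2^{<κ} (downward closed) with more than κ branches of length κ, and 2^κ > κ^+ with K having fewer than 2^κ branches of length κ. Then there is an equivalence relation E on 2^κ that is the union of an open set and a closed set, has more than κ equivalence classes, and the identity on 2^κ is not Borel reducible to E. -/
open Set

universe u

namespace GDST

lemma cBasic_isOpen_s14 {I : Type u} [LT I] (ζ : I → Bool) (β : I) :
    IsOpen (cBasic ζ β) :=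
  TopologicalSpace.isOpen_generateFrom_of_mem ⟨ζ, β, rfl⟩

lemma mem_cBasic_self {I : Type u} [LT I] (ζ : I → Bool) (β : I) :
    ζ ∈ cBasic ζ β := fun _ _ => rfl

/-- suppose `κ` is regular uncountable (with `κ^{<κ} = κ`), there is a
downward-closed tree `K ⊆ 2^{<κ}` (modelled as a set of pairs `(β, ζ)` depending only on
`ζ ↾ β`) with more than `κ` branches of length `κ`, and `2^κ > κ⁺` while `K` has fewer
than `2^κ` branches.  Then there is an equivalence relation `E` on `2^κ` which is the union
of an open set and a closed set, has more than `κ` equivalence classes, and the identity on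
`2^κ` is not Borel reducible to `E`. -/
theorem stmt14 (κ : Cardinal) (hreg : κ.IsRegular) (hunc : Cardinal.aleph0 < κ)
    (hpow : Cardinal.powerlt κ κ = κ)
    (I : Type) [LinearOrder I] [WellFoundedLT I] (hI : Cardinal.mk I = κ)
    (hseg : ∀ i : I, Cardinal.mk {j : I // j < i} < κ)
    (K : Set (I × (I → Bool)))
    (hKext : ∀ (β : I) (ζ ζ' : I → Bool), (∀ α : I, α < β → ζ α = ζ' α) →
      ((β, ζ) ∈ K ↔ (β, ζ') ∈ K))
    (hKdc : ∀ (β : I) (ζ : I → Bool), (β, ζ) ∈ K → ∀ γ : I, γ ≤ β → (γ, ζ) ∈ K)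
    (hmany : κ < Cardinal.mk {η : I → Bool // ∀ β : I, (β, η) ∈ K})
    (hbig : Order.succ κ < 2 ^ κ)
    (hfew : Cardinal.mk {η : I → Bool // ∀ β : I, (β, η) ∈ K} < 2 ^ κ) :
    ∃ (r : CS I → CS I → Prop) (hr : Equivalence r),
      (∃ (U V : Set (CS I × CS I)), IsOpen U ∧ IsClosed V ∧
        {x : CS I × CS I | r x.1 x.2} = U ∪ V) ∧
      κ < Cardinal.mk (Quotient (Setoid.mk r hr)) ∧
      ¬ ∃ f : CS I → CS I, (∀ U : Set (CS I), IsOpen U → IsCBorel (f ⁻¹' U)) ∧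
        ∀ η ξ : CS I, (η = ξ ↔ r (f η) (f ξ)) := by
  classical
  -- the set of branches of K
  set B : Set (CS I) := {η : CS I | ∀ β : I, (β, η) ∈ K} with hB
  -- cardinality of the full space
  have hCS : Cardinal.mk (CS I) = 2 ^ κ := by
    have : Cardinal.mk (CS I) = Cardinal.mk Bool ^ Cardinal.mk I :=
      (Cardinal.power_def Bool I).symm
    rw [this, Cardinal.mk_bool, hI]
  have hBcard : Cardinal.mk B = Cardinal.mk {η : I → Bool // ∀ β : I, (β, η) ∈ K} := rfl
  have haleph : Cardinal.aleph0 ≤ κ := hunc.le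
  -- I has no maximal element
  have hnomax : ∀ α : I, ∃ β : I, α < β := by
    intro α
    by_contra h
    push_neg at h
    have hinj : Function.Injective (fun j : I =>
        if hj : j < α then (some ⟨j, hj⟩ : Option {j : I // j < α}) else none) := by
      intro j k hjk
      by_cases hj : j < α <;> by_cases hk : k < α <;> simp [hj, hk] at hjk
      · exact hjk
      · exact (le_antisymm (h j) (not_lt.mp hj)).trans
          (le_antisymm (h k) (not_lt.mp hk)).symm
    have h1 : Cardinal.mk I ≤ Cardinal.mk (Option {j : I // j < α}) :=
      Cardinal.mk_le_of_injective hinj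
    rw [Cardinal.mk_option, hI] at h1
    have h2 : Cardinal.mk {j : I // j < α} + 1 < κ :=
      Cardinal.add_lt_of_lt haleph (hseg α)
        (lt_of_lt_of_le Cardinal.one_lt_aleph0 haleph)
    exact absurd h1 (not_le.mpr h2)
  -- the complement of B is open
  have hBopen : IsOpen Bᶜ := by
    rw [isOpen_iff_forall_mem_open]
    intro η hη
    simp only [mem_compl_iff, hB, mem_setOf_eq] at hη
    push_neg at hη
    obtain ⟨β, hβ⟩ := hη
    refine ⟨cBasic η β, ?_, cBasic_isOpen_s14 η β, mem_cBasic_self η β⟩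
    intro ξ hξ
    simp only [mem_compl_iff, hB, mem_setOf_eq]
    intro hall
    exact hβ ((hKext β ξ η fun α hα => (hξ α hα)).mp (hall β))
  -- the relation
  set r : CS I → CS I → Prop := fun η ξ => η = ξ ∨ (η ∉ B ∧ ξ ∉ B) with hrdef
  have hr : Equivalence r := by
    constructor
    · intro η; exact Or.inl rfl
    · rintro η ξ (rfl | ⟨h1, h2⟩)
      · exact Or.inl rfl
      · exact Or.inr ⟨h2, h1⟩
    · rintro η ξ χ (rfl | ⟨h1, h2⟩) (rfl | ⟨h3, h4⟩)
      · exact Or.inl rfl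
      · exact Or.inr ⟨h3, h4⟩
      · exact Or.inr ⟨h1, h2⟩
      · exact Or.inr ⟨h1, h4⟩
  refine ⟨r, hr, ?_, ?_, ?_⟩
  · -- union of an open and a closed set
    refine ⟨Bᶜ ×ˢ Bᶜ, {x : CS I × CS I | x.1 = x.2}, hBopen.prod hBopen, ?_, ?_⟩
    · -- the diagonal is closed
      rw [← isOpen_compl_iff, isOpen_iff_forall_mem_open]
      rintro ⟨η, ξ⟩ hx
      simp only [mem_compl_iff, mem_setOf_eq] at hx
      have : ∃ α : I, η α ≠ ξ α := by
        by_contra h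
        push_neg at h
        exact hx (funext h)
      obtain ⟨α, hα⟩ := this
      obtain ⟨β, hβ⟩ := hnomax α
      refine ⟨cBasic η β ×ˢ cBasic ξ β, ?_,
        (cBasic_isOpen_s14 η β).prod (cBasic_isOpen_s14 ξ β),
        ⟨mem_cBasic_self η β, mem_cBasic_self ξ β⟩⟩
      rintro ⟨η', ξ'⟩ ⟨h1, h2⟩
      simp only [mem_compl_iff, mem_setOf_eq]
      intro he
      apply hα
      rw [← h1 α hβ, ← h2 α hβ, he]
    · ext ⟨η, ξ⟩
      simp only [mem_setOf_eq, mem_union, mem_prod, mem_compl_iff]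
      tauto
  · -- more than κ classes
    have hinj : Function.Injective (fun b : B =>
        (Quotient.mk (Setoid.mk r hr) b.val)) := by
      intro b b' hbb
      have := Quotient.exact hbb
      rcases this with h | ⟨h1, _⟩
      · exact Subtype.ext h
      · exact absurd b.property h1
    calc κ < Cardinal.mk B := hmany
      _ ≤ _ := Cardinal.mk_le_of_injective hinj
  · -- no reduction
    rintro ⟨f, -, hred⟩
    -- quotient has small cardinality
    have hne : ∃ η₀ : CS I, η₀ ∉ B := by
      by_contra h
      push_neg at h
      have : Function.Injective (fun η : CS I => (⟨η, h η⟩ : B)) := by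
        intro η ξ hηξ
        exact congrArg Subtype.val hηξ
      have h1 : Cardinal.mk (CS I) ≤ Cardinal.mk B := Cardinal.mk_le_of_injective this
      rw [hCS] at h1
      exact absurd h1 (not_le.mpr hfew)
    obtain ⟨η₀, hη₀⟩ := hne
    have hsurj : Function.Surjective (fun o : Option B =>
        (Quotient.mk (Setoid.mk r hr) (o.elim η₀ Subtype.val))) := by
      intro q
      obtain ⟨η, rfl⟩ := Quotient.exists_rep q
      by_cases hη : η ∈ B
      · exact ⟨some ⟨η, hη⟩, rfl⟩
      · exact ⟨none, Quotient.sound (Or.inr ⟨hη₀, hη⟩)⟩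
    have hup : Cardinal.mk (Quotient (Setoid.mk r hr)) ≤ Cardinal.mk B + 1 := by
      have := Cardinal.mk_le_of_surjective hsurj
      rwa [Cardinal.mk_option] at this
    have hBinf : Cardinal.aleph0 ≤ Cardinal.mk B := haleph.trans hmany.le
    rw [Cardinal.add_one_eq hBinf] at hup
    have hdown : Cardinal.mk (CS I) ≤ Cardinal.mk (Quotient (Setoid.mk r hr)) := by
      apply Cardinal.mk_le_of_injective (f := fun η => Quotient.mk (Setoid.mk r hr) (f η))
      intro η ξ hηξ
      exact (hred η ξ).mpr (Quotient.exact hηξ)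
    rw [hCS] at hdown
    exact absurd (hdown.trans hup) (not_le.mpr hfew)

end GDST
end

section
/- Let κ be regular uncountable, X ⊆ κ a set of ordinals, and Y ⊆ κ a set of ordinals of uncountable cofinality. Suppose X ◊-reflects to Y, i.e. there is a sequence ⟨D_α : α ∈ Y⟩ with each D_α ⊆ α stationary in α, such that for every stationary Z ⊆ X the set {α ∈ Y : D_α = Z ∩ α} is stationary in κ. Then E_X is continuously reducible to E_Y, where for W ⊆ κ, E_W relates A, B ⊆ κ iff (A Δ B) ∩ W is non-stationary in κ. Moreover the map f(A) = {α ∈ Y : A ∩ X ∩ D_α is stationary in α} is such a reduction. -/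
open Set

universe u

namespace GDST

private lemma exists_acc {o : Ordinal.{0}} (ho : Cardinal.aleph0 < o.cof)
    {C C' : Set Ordinal.{0}} (hC : UnbIn C o) (hC' : UnbIn C' o)
    {a : Ordinal.{0}} (ha : a < o) :
    ∃ s, a < s ∧ s < o ∧ s ≠ 0 ∧
      (∀ b < s, ∃ c ∈ C, b < c ∧ c < s) ∧ (∀ b < s, ∃ c ∈ C', b < c ∧ c < s) := by
  have step : ∀ x : {x : Ordinal.{0} // x < o}, ∃ y : {x : Ordinal.{0} // x < o},
      x.1 < y.1 ∧ (∃ c ∈ C, x.1 < c ∧ c < y.1) ∧ (∃ c ∈ C', x.1 < c ∧ c < y.1) := by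
    rintro ⟨x, hx⟩
    obtain ⟨c, hcC, hxc, hco⟩ := hC x hx
    obtain ⟨c', hc'C', hcc', hc'o⟩ := hC' c hco
    obtain ⟨y, _, hc'y, hyo⟩ := hC c' hc'o
    exact ⟨⟨y, hyo⟩, lt_trans hxc (lt_trans hcc' hc'y),
      ⟨c, hcC, hxc, lt_trans hcc' hc'y⟩, ⟨c', hc'C', lt_trans hxc hcc', hc'y⟩⟩
  let g : ℕ → {x : Ordinal.{0} // x < o} := fun n =>
    Nat.rec ⟨a, ha⟩ (fun _ p => (step p).choose) n
  have hg : ∀ n, (g n).1 < (g (n+1)).1 ∧ (∃ c ∈ C, (g n).1 < c ∧ c < (g (n+1)).1) ∧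
      (∃ c ∈ C', (g n).1 < c ∧ c < (g (n+1)).1) := fun n => (step (g n)).choose_spec
  have hle : ∀ n, (g n).1 ≤ ⨆ m, (g m).1 := fun n => Ordinal.le_iSup (fun m => (g m).1) n
  have hso : (⨆ m, (g m).1) < o :=
    Ordinal.iSup_lt_ord (by rw [Cardinal.mk_nat]; exact ho) fun n => (g n).2
  have has : a < ⨆ m, (g m).1 := lt_of_lt_of_le (hg 0).1 (hle 1)
  refine ⟨⨆ m, (g m).1, has, hso, ?_, ?_, ?_⟩
  · exact ne_of_gt (lt_of_le_of_lt (show (0 : Ordinal.{0}) ≤ a from by simp) has)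
  · intro b hb
    obtain ⟨n, hn⟩ := Ordinal.lt_iSup_iff.mp hb
    obtain ⟨c, hcC, h1, h2⟩ := (hg n).2.1
    exact ⟨c, hcC, lt_trans hn h1, lt_of_lt_of_le h2 (hle (n+1))⟩
  · intro b hb
    obtain ⟨n, hn⟩ := Ordinal.lt_iSup_iff.mp hb
    obtain ⟨c, hcC', h1, h2⟩ := (hg n).2.2
    exact ⟨c, hcC', lt_trans hn h1, lt_of_lt_of_le h2 (hle (n+1))⟩

private lemma clubIn_inter {o : Ordinal.{0}} (ho : Cardinal.aleph0 < o.cof)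
    {C C' : Set Ordinal.{0}} (h : ClubIn C o) (h' : ClubIn C' o) : ClubIn (C ∩ C') o := by
  constructor
  · intro a hao ha0 hacc
    have h1 : ∀ b < a, ∃ c ∈ C, b < c ∧ c < a := fun b hb => by
      obtain ⟨c, hc, hbc, hca⟩ := hacc b hb; exact ⟨c, hc.1, hbc, hca⟩
    have h2 : ∀ b < a, ∃ c ∈ C', b < c ∧ c < a := fun b hb => by
      obtain ⟨c, hc, hbc, hca⟩ := hacc b hb; exact ⟨c, hc.2, hbc, hca⟩
    exact ⟨h.1 a hao ha0 h1, h'.1 a hao ha0 h2⟩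
  · intro a hao
    obtain ⟨s, has, hso, hs0, hsC, hsC'⟩ := exists_acc ho h.2 h'.2 hao
    exact ⟨s, ⟨h.1 s hso hs0 hsC, h'.1 s hso hs0 hsC'⟩, has, hso⟩

def AccPts (C : Set Ordinal.{0}) (o : Ordinal.{0}) : Set Ordinal.{0} :=
  {a | a < o ∧ a ≠ 0 ∧ ∀ b < a, ∃ c ∈ C, b < c ∧ c < a}

private lemma clubIn_accPts {o : Ordinal.{0}} (ho : Cardinal.aleph0 < o.cof)
    {C : Set Ordinal.{0}} (h : ClubIn C o) : ClubIn (AccPts C o) o := by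
  constructor
  · intro a hao ha0 hacc
    refine ⟨hao, ha0, fun b hb => ?_⟩
    obtain ⟨d, hd, hbd, hda⟩ := hacc b hb
    obtain ⟨c, hc, hbc, hcd⟩ := hd.2.2 b hbd
    exact ⟨c, hc, hbc, lt_trans hcd hda⟩
  · intro a hao
    obtain ⟨s, has, hso, hs0, hsC, _⟩ := exists_acc ho h.2 h.2 hao
    exact ⟨s, ⟨hso, hs0, hsC⟩, has, hso⟩

private lemma clubIn_restrict {o α : Ordinal.{0}} {C : Set Ordinal.{0}}
    (h : ClosedIn C o) (hα : α ∈ AccPts C o) : ClubIn (C ∩ Set.Iio α) α := by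
  constructor
  · intro a haα ha0 hacc
    have h1 : ∀ b < a, ∃ c ∈ C, b < c ∧ c < a := fun b hb => by
      obtain ⟨c, hc, hbc, hca⟩ := hacc b hb; exact ⟨c, hc.1, hbc, hca⟩
    exact ⟨h a (lt_trans haα hα.1) ha0 h1, haα⟩
  · intro b hb
    obtain ⟨c, hc, h1, h2⟩ := hα.2.2 b hb
    exact ⟨c, ⟨hc, h2⟩, h1, h2⟩

private lemma not_statIn_iff {S : Set Ordinal.{0}} {o : Ordinal.{0}} :
    ¬ StatIn S o ↔ ∃ C, ClubIn C o ∧ S ∩ C = ∅ := by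
  unfold StatIn
  push_neg
  simp [Set.not_nonempty_iff_eq_empty]

private lemma statIn_mono {S T : Set Ordinal.{0}} {o : Ordinal.{0}} (h : S ⊆ T)
    (hS : StatIn S o) : StatIn T o := by
  intro C hC
  obtain ⟨x, hxS, hxC⟩ := hS C hC
  exact ⟨x, h hxS, hxC⟩

private lemma not_statIn_empty {o : Ordinal.{0}} (ho : Cardinal.aleph0 < o.cof) :
    ¬ StatIn (∅ : Set Ordinal.{0}) o := by
  have hlim : Order.IsSuccLimit o := Ordinal.aleph0_le_cof.mp ho.le
  intro h
  obtain ⟨x, hx, -⟩ := h (Set.Iio o)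
    ⟨fun a hao _ _ => hao, fun a hao => ⟨Order.succ a, hlim.succ_lt hao, Order.lt_succ a, hlim.succ_lt hao⟩⟩
  exact hx

private lemma not_statIn_union {o : Ordinal.{0}} (ho : Cardinal.aleph0 < o.cof)
    {S T : Set Ordinal.{0}} (hS : ¬ StatIn S o) (hT : ¬ StatIn T o) :
    ¬ StatIn (S ∪ T) o := by
  obtain ⟨C, hC, hCd⟩ := not_statIn_iff.mp hS
  obtain ⟨C', hC', hC'd⟩ := not_statIn_iff.mp hT
  rw [not_statIn_iff]
  refine ⟨C ∩ C', clubIn_inter ho hC hC', ?_⟩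
  rw [Set.eq_empty_iff_forall_notMem]
  rintro x ⟨hx | hx, hxC, hxC'⟩
  · exact Set.eq_empty_iff_forall_notMem.mp hCd x ⟨hx, hxC⟩
  · exact Set.eq_empty_iff_forall_notMem.mp hC'd x ⟨hx, hxC'⟩

private lemma statIn_of_club_subset {o : Ordinal.{0}} (ho : Cardinal.aleph0 < o.cof)
    {S T C : Set Ordinal.{0}} (hS : StatIn S o) (hC : ClubIn C o)
    (hsub : ∀ x, x ∈ S → x ∈ C → x ∈ T) : StatIn T o := by
  intro C' hC'
  obtain ⟨x, hxS, hx⟩ := hS (C ∩ C') (clubIn_inter ho hC hC')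
  exact ⟨x, hsub x hxS hx.1, hx.2⟩


/-- if `X` ◊-reflects to `Y` (a set of ordinals of uncountable cofinality),
witnessed by a sequence `⟨D α : α ∈ Y⟩` of sets stationary in `α` guessing every stationary
`Z ⊆ X` stationarily often, then `E_X` is continuously reducible to `E_Y`, and moreover the
map `f(A) = {α ∈ Y : A ∩ X ∩ D α is stationary in α}` is such a reduction. -/
theorem stmt15 (κ : Cardinal) (hreg : κ.IsRegular) (hunc : Cardinal.aleph0 < κ)
    (X Y : Set Ordinal) (hXsub : X ⊆ Set.Iio κ.ord) (hYsub : Y ⊆ Set.Iio κ.ord)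
    (hYcof : ∀ α ∈ Y, Cardinal.aleph0 < Ordinal.cof α)
    (D : Ordinal → Set Ordinal)
    (hD1 : ∀ α ∈ Y, D α ⊆ Set.Iio α ∧ StatIn (D α) α)
    (hD2 : ∀ Z : Set Ordinal, Z ⊆ X → StatIn Z κ.ord →
      StatIn {α | α ∈ Y ∧ D α = Z ∩ Set.Iio α} κ.ord) :
    ∃ f : CS (Sub κ) → CS (Sub κ), Continuous f ∧
      (∀ (η : CS (Sub κ)) (α : Sub κ),
        f η α = true ↔ (α.1 ∈ Y ∧ StatIn (toSet κ η ∩ X ∩ D α.1) α.1)) ∧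
      (∀ A B : CS (Sub κ),
        (¬ StatIn (symmDiff (toSet κ A) (toSet κ B) ∩ X) κ.ord) ↔
        (¬ StatIn (symmDiff (toSet κ (f A)) (toSet κ (f B)) ∩ Y) κ.ord)) := by
  classical
  have hcof : Cardinal.aleph0 < κ.ord.cof := by rw [hreg.cof_eq]; exact hunc
  let f : CS (Sub κ) → CS (Sub κ) := fun η α =>
    decide (α.1 ∈ Y ∧ StatIn (toSet κ η ∩ X ∩ D α.1) α.1)
  have hf : ∀ η α, f η α = true ↔ (α.1 ∈ Y ∧ StatIn (toSet κ η ∩ X ∩ D α.1) α.1) :=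
    fun η α => decide_eq_true_iff
  have hmemt : ∀ (η : CS (Sub κ)) (o : Ordinal),
      o ∈ toSet κ η ↔ ∃ h : o < κ.ord, η ⟨o, h⟩ = true := fun η o => Iff.rfl
  -- locality
  have hloc : ∀ (η η' : CS (Sub κ)) (α : Sub κ), (∀ γ : Sub κ, γ < α → η γ = η' γ) →
      f η α = f η' α := by
    intro η η' α hag
    show decide _ = decide _
    rw [decide_eq_decide]
    by_cases hY : α.1 ∈ Y
    · have hsets : toSet κ η ∩ X ∩ D α.1 = toSet κ η' ∩ X ∩ D α.1 := by
        ext o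
        simp only [Set.mem_inter_iff, hmemt]
        constructor
        · rintro ⟨⟨⟨ho, hηo⟩, hX⟩, hDo⟩
          have hoα : o < α.1 := (hD1 α.1 hY).1 hDo
          exact ⟨⟨⟨ho, (hag ⟨o, ho⟩ hoα).symm ▸ hηo⟩, hX⟩, hDo⟩
        · rintro ⟨⟨⟨ho, hηo⟩, hX⟩, hDo⟩
          have hoα : o < α.1 := (hD1 α.1 hY).1 hDo
          exact ⟨⟨⟨ho, (hag ⟨o, ho⟩ hoα) ▸ hηo⟩, hX⟩, hDo⟩
      rw [hsets]
    · simp [hY]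
  -- continuity
  have hcont : Continuous f := by
    refine continuous_generateFrom_iff.mpr ?_
    rintro U ⟨ζ, β, rfl⟩
    have hU : f ⁻¹' cBasic ζ β = ⋃ η ∈ f ⁻¹' cBasic ζ β, cBasic η β := by
      ext η'
      simp only [Set.mem_iUnion, Set.mem_preimage]
      constructor
      · intro h
        exact ⟨η', h, fun γ _ => rfl⟩
      · rintro ⟨η, hη, hag⟩
        intro γ hγ
        have heq : f η' γ = f η γ :=
          hloc η' η γ (fun δ hδ => hag δ ((show δ.1 < γ.1 from hδ).trans (show γ.1 < β.1 from hγ)))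
        rw [heq]
        exact hη γ hγ
    rw [hU]
    exact isOpen_biUnion fun η _ => TopologicalSpace.isOpen_generateFrom_of_mem ⟨η, β, rfl⟩
  have hYκ : ∀ α, α ∈ Y → α < κ.ord := fun α h => hYsub h
  have hmem : ∀ (η : CS (Sub κ)) (o : Ordinal), o ∈ toSet κ (f η) ↔
      (o ∈ Y ∧ StatIn (toSet κ η ∩ X ∩ D o) o) := by
    intro η o
    rw [hmemt]
    constructor
    · rintro ⟨h, hh⟩
      exact (hf η ⟨o, h⟩).mp hh
    · intro h
      exact ⟨hYκ o h.1, (hf η ⟨o, hYκ o h.1⟩).mpr h⟩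
  -- key lemma for direction 2
  have key : ∀ A B : CS (Sub κ),
      StatIn ((toSet κ A \ toSet κ B) ∩ X) κ.ord →
      StatIn ((toSet κ (f A) \ toSet κ (f B)) ∩ Y) κ.ord := by
    intro A B hZ
    have hS := hD2 _ (Set.inter_subset_right) hZ
    refine statIn_mono ?_ hS
    rintro α ⟨hαY, hDα⟩
    have hcofα := hYcof α hαY
    have hstat : StatIn (toSet κ A ∩ X ∩ D α) α := by
      have heq : toSet κ A ∩ X ∩ D α = D α := by
        apply Set.Subset.antisymm (Set.inter_subset_right)
        intro x hx
        have hx' : x ∈ ((toSet κ A \ toSet κ B) ∩ X) ∩ Set.Iio α := hDα ▸ hx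
        exact ⟨⟨hx'.1.1.1, hx'.1.2⟩, hx⟩
      rw [heq]
      exact (hD1 α hαY).2
    have hempty : toSet κ B ∩ X ∩ D α = ∅ := by
      rw [Set.eq_empty_iff_forall_notMem]
      rintro x ⟨⟨xB, _⟩, hxD⟩
      have hx' : x ∈ ((toSet κ A \ toSet κ B) ∩ X) ∩ Set.Iio α := hDα ▸ hxD
      exact hx'.1.1.2 xB
    refine ⟨⟨(hmem A α).mpr ⟨hαY, hstat⟩, ?_⟩, hαY⟩
    intro hmemB
    have hst := ((hmem B α).mp hmemB).2
    rw [hempty] at hst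
    exact not_statIn_empty hcofα hst
  -- direction 1
  have dir1 : ∀ A B : CS (Sub κ),
      ¬ StatIn (symmDiff (toSet κ A) (toSet κ B) ∩ X) κ.ord →
      ¬ StatIn (symmDiff (toSet κ (f A)) (toSet κ (f B)) ∩ Y) κ.ord := by
    intro A B h
    obtain ⟨C, hC, hdisj⟩ := not_statIn_iff.mp h
    rw [not_statIn_iff]
    refine ⟨AccPts C κ.ord, clubIn_accPts hcof hC, ?_⟩
    rw [Set.eq_empty_iff_forall_notMem]
    rintro α ⟨⟨hαsd, hαY⟩, hαacc⟩
    have hcofα := hYcof α hαY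
    have hsubc : ClubIn (C ∩ Set.Iio α) α := clubIn_restrict hC.1 hαacc
    have hiff : StatIn (toSet κ A ∩ X ∩ D α) α ↔ StatIn (toSet κ B ∩ X ∩ D α) α := by
      constructor
      · intro h1
        refine statIn_of_club_subset hcofα h1 hsubc ?_
        rintro x ⟨⟨xA, xX⟩, xD⟩ ⟨xC, _⟩
        refine ⟨⟨?_, xX⟩, xD⟩
        by_contra xnB
        have hxs : x ∈ symmDiff (toSet κ A) (toSet κ B) ∩ X ∩ C :=
          ⟨⟨Set.mem_symmDiff.mpr (Or.inl ⟨xA, xnB⟩), xX⟩, xC⟩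
        rw [hdisj] at hxs
        exact hxs
      · intro h1
        refine statIn_of_club_subset hcofα h1 hsubc ?_
        rintro x ⟨⟨xB, xX⟩, xD⟩ ⟨xC, _⟩
        refine ⟨⟨?_, xX⟩, xD⟩
        by_contra xnA
        have hxs : x ∈ symmDiff (toSet κ A) (toSet κ B) ∩ X ∩ C :=
          ⟨⟨Set.mem_symmDiff.mpr (Or.inr ⟨xB, xnA⟩), xX⟩, xC⟩
        rw [hdisj] at hxs
        exact hxs
    rcases Set.mem_symmDiff.mp hαsd with ⟨hin, hnotin⟩ | ⟨hin, hnotin⟩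
    · exact hnotin ((hmem B α).mpr ⟨hαY, hiff.mp ((hmem A α).mp hin).2⟩)
    · exact hnotin ((hmem A α).mpr ⟨hαY, hiff.mpr ((hmem B α).mp hin).2⟩)
  -- direction 2
  have dir2 : ∀ A B : CS (Sub κ),
      StatIn (symmDiff (toSet κ A) (toSet κ B) ∩ X) κ.ord →
      StatIn (symmDiff (toSet κ (f A)) (toSet κ (f B)) ∩ Y) κ.ord := by
    intro A B h
    have hsplit : symmDiff (toSet κ A) (toSet κ B) ∩ X =
        ((toSet κ A \ toSet κ B) ∩ X) ∪ ((toSet κ B \ toSet κ A) ∩ X) := by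
      rw [Set.symmDiff_def, Set.union_inter_distrib_right]
    rw [hsplit] at h
    have hone : StatIn ((toSet κ A \ toSet κ B) ∩ X) κ.ord ∨
        StatIn ((toSet κ B \ toSet κ A) ∩ X) κ.ord := by
      by_contra hcon
      push_neg at hcon
      exact (not_statIn_union hcof hcon.1 hcon.2) h
    rcases hone with h1 | h1
    · exact statIn_mono
        (fun α hα => ⟨Set.mem_symmDiff.mpr (Or.inl ⟨hα.1.1, hα.1.2⟩), hα.2⟩) (key A B h1)
    · exact statIn_mono
        (fun α hα => ⟨Set.mem_symmDiff.mpr (Or.inr ⟨hα.1.1, hα.1.2⟩), hα.2⟩) (key B A h1)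
  exact ⟨f, hcont, hf, fun A B => ⟨fun h => dir1 A B h, fun h h' => h (dir2 A B h')⟩⟩

end GDST
end
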